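/- Let R be a regular local ring with regular system of parameters x, y, z, and let m ≤ n be positive integers. Then (x, z^m) ∩ (y, z^n) = (xy, y z^m, z^n). -/

import Mathlib

lemma mem_of_mul_mem' {R : Type} [CommRing R] {I : Ideal R} {r : R}
    (h : IsSMulRegular (R ⧸ (I • ⊤ : Submodule R R)) r) {c : R} (hc : c * r ∈ I) : c ∈ I := by
  have hIT : (I • ⊤ : Submodule R R) = I := by rw [Ideal.smul_eq_mul, Ideal.mul_top]
  have h0 : r • (Submodule.Quotient.mk c : R ⧸ (I • ⊤ : Submodule R R)) =
      r • (0 : R ⧸ (I • ⊤ : Submodule R R)) := by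
    rw [smul_zero, ← Submodule.Quotient.mk_smul, Submodule.Quotient.mk_eq_zero, hIT]
    rw [smul_eq_mul, mul_comm]; exact hc
  have h2 := h h0
  rw [Submodule.Quotient.mk_eq_zero, hIT] at h2
  exact h2

lemma krull_aux {R : Type} [CommRing R] [IsNoetherianRing R] [IsLocalRing R] {I J : Ideal R}
    (hJ : J ≠ ⊤) {c : R} (h : ∀ k : ℕ, c ∈ I ⊔ J ^ k) : c ∈ I := by
  have hIT : (I • ⊤ : Submodule R R) = I := by rw [Ideal.smul_eq_mul, Ideal.mul_top]
  haveI : Module.Finite R (R ⧸ (I • ⊤ : Submodule R R)) :=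
    Module.Finite.of_surjective (Submodule.mkQ _) (Submodule.mkQ_surjective _)
  have hbot := Ideal.iInf_pow_smul_eq_bot_of_isLocalRing
    (M := R ⧸ (I • ⊤ : Submodule R R)) (I := J) hJ
  have hmem : (Submodule.Quotient.mk c : R ⧸ (I • ⊤ : Submodule R R)) ∈
      (⨅ i : ℕ, J ^ i • ⊤ : Submodule R (R ⧸ (I • ⊤ : Submodule R R))) := by
    rw [Submodule.mem_iInf]
    intro k
    obtain ⟨u, hu, v, hv, huv⟩ := Submodule.mem_sup.mp (h k)
    have e1 : (Submodule.Quotient.mk c : R ⧸ (I • ⊤ : Submodule R R)) =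
        v • (Submodule.Quotient.mk 1) := by
      rw [← Submodule.Quotient.mk_smul, show v • (1:R) = v from by simp, ← huv]
      rw [show (Submodule.Quotient.mk (u + v) : R ⧸ (I • ⊤ : Submodule R R))
        = Submodule.Quotient.mk u + Submodule.Quotient.mk v from rfl]
      have h3 : (Submodule.Quotient.mk u : R ⧸ (I • ⊤ : Submodule R R)) = 0 := by
        rw [Submodule.Quotient.mk_eq_zero, hIT]; exact hu
      rw [h3, zero_add]
    rw [e1]
    exact Submodule.smul_mem_smul hv Submodule.mem_top
  rw [hbot, Submodule.mem_bot, Submodule.Quotient.mk_eq_zero, hIT] at hmem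
  exact hmem

/-- let `R` be a regular local ring with regular system of parameters `x, y, z`
and let `m ≤ n` be positive integers.  Then `(x, z^m) ∩ (y, z^n) = (xy, y z^m, z^n)`. -/
theorem stmt11 (R : Type) [CommRing R] [IsNoetherianRing R] [IsLocalRing R]
    (x y z : R) (hreg : RingTheory.Sequence.IsRegular R [x, y, z])
    (hmax : Ideal.span {x, y, z} = IsLocalRing.maximalIdeal R)
    (m n : ℕ) (hm : 0 < m) (hmn : m ≤ n) :
    Ideal.span {x, z ^ m} ⊓ Ideal.span {y, z ^ n} =
      Ideal.span {x * y, y * z ^ m, z ^ n} := by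
  -- extract the regularity conditions
  have hwr := hreg.toIsWeaklyRegular
  have h1' := hwr.regular_mod_prev 1 (by norm_num)
  have h2' := hwr.regular_mod_prev 2 (by norm_num)
  change IsSMulRegular (R ⧸ (Ideal.ofList [x] • ⊤ : Submodule R R)) y at h1'
  change IsSMulRegular (R ⧸ (Ideal.ofList [x, y] • ⊤ : Submodule R R)) z at h2'
  rw [Ideal.ofList_singleton] at h1'
  rw [Ideal.ofList_cons, Ideal.ofList_singleton, ← Ideal.span_insert] at h2'
  have hy : ∀ c : R, c * y ∈ Ideal.span {x} → c ∈ Ideal.span {x} :=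
    fun c hc => mem_of_mul_mem' h1' hc
  have hz : ∀ c : R, c * z ∈ Ideal.span {x, y} → c ∈ Ideal.span {x, y} :=
    fun c hc => mem_of_mul_mem' h2' hc
  -- span {y} is a proper ideal
  have hyne : Ideal.span {y} ≠ ⊤ := by
    intro htop
    have hle : Ideal.span {y} ≤ IsLocalRing.maximalIdeal R := by
      rw [← hmax, Ideal.span_le]
      intro w hw; rcases hw with rfl; exact Ideal.subset_span (by simp)
    exact (IsLocalRing.maximalIdeal.isMaximal R).ne_top (top_le_iff.mp (htop ▸ hle))
  -- L1: z is regular mod (x)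
  have L1 : ∀ c : R, c * z ∈ Ideal.span {x} → c ∈ Ideal.span {x} := by
    set T : Ideal R := (Ideal.span {x}).colon (Ideal.span {z}) with hT
    have step : T ≤ Ideal.span {x} ⊔ Ideal.span {y} * T := by
      intro t ht
      have htz : t * z ∈ Ideal.span {x} := Ideal.mem_colon_span_singleton.mp ht
      have htz2 : t * z ∈ Ideal.span {x, y} :=
        Ideal.span_mono (Set.singleton_subset_iff.mpr (by simp)) htz
      obtain ⟨a, b, hab⟩ := Ideal.mem_span_pair.mp (hz t htz2)
      have hbz : (b * z) * y ∈ Ideal.span {x} := by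
        have e : (b * z) * y = t * z - (a * z) * x := by linear_combination z * hab
        rw [e]
        exact sub_mem htz (Ideal.mul_mem_left _ _ (Ideal.mem_span_singleton_self x))
      have hbT : b * z ∈ Ideal.span {x} := hy _ hbz
      have hbT' : b ∈ T := Ideal.mem_colon_span_singleton.mpr hbT
      have : t = a * x + y * b := by linear_combination -hab
      rw [this]
      exact Submodule.add_mem_sup
        (Ideal.mul_mem_left _ _ (Ideal.mem_span_singleton_self x))
        (Ideal.mul_mem_mul (Ideal.mem_span_singleton_self y) hbT')
    have key2 : ∀ k : ℕ, T ≤ Ideal.span {x} ⊔ Ideal.span {y} ^ k := by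
      intro k
      induction k with
      | zero => simp
      | succ k ih =>
        refine step.trans ?_
        have h4 : Ideal.span {y} * T ≤ Ideal.span {y} * (Ideal.span {x} ⊔ Ideal.span {y} ^ k) :=
          Ideal.mul_mono_right ih
        have h5 : Ideal.span {y} * (Ideal.span {x} ⊔ Ideal.span {y} ^ k)
            ≤ Ideal.span {x} ⊔ Ideal.span {y} ^ (k + 1) := by
          rw [Ideal.mul_sup]
          refine sup_le (le_sup_of_le_left Ideal.mul_le_right) (le_sup_of_le_right ?_)
          rw [pow_succ]
          exact le_of_eq (mul_comm _ _)
        exact sup_le le_sup_left ((h4.trans h5))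
    intro c hc
    exact krull_aux hyne (fun k => key2 k (Ideal.mem_colon_span_singleton.mpr hc))
  -- L1pow: z^k is regular mod (x)
  have L1pow : ∀ (k : ℕ) (c : R), c * z ^ k ∈ Ideal.span {x} → c ∈ Ideal.span {x} := by
    intro k
    induction k with
    | zero => intro c hc; simpa using hc
    | succ k ih =>
      intro c hc
      have : (c * z ^ k) * z ∈ Ideal.span {x} := by
        rw [mul_assoc, ← pow_succ]; exact hc
      exact ih c (L1 _ this)
  -- L2: y is regular mod (x, z)
  have L2 : ∀ c : R, c * y ∈ Ideal.span {x, z} → c ∈ Ideal.span {x, z} := by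
    intro c hc
    obtain ⟨a, d, had⟩ := Ideal.mem_span_pair.mp hc
    have hdz : d * z ∈ Ideal.span {x, y} := by
      have e : d * z = c * y - a * x := by linear_combination had
      rw [e]
      exact sub_mem (Ideal.mul_mem_left _ _ (Ideal.subset_span (by simp)))
        (Ideal.mul_mem_left _ _ (Ideal.subset_span (by simp)))
    obtain ⟨e, f, hef⟩ := Ideal.mem_span_pair.mp (hz d hdz)
    have hcf : (c - f * z) * y ∈ Ideal.span {x} := by
      have e2 : (c - f * z) * y = (a + e * z) * x := by linear_combination -had - z * hef
      rw [e2]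
      exact Ideal.mul_mem_left _ _ (Ideal.mem_span_singleton_self x)
    obtain ⟨g, hg⟩ := Ideal.mem_span_singleton'.mp (hy _ hcf)
    exact Ideal.mem_span_pair.mpr ⟨g, f, by linear_combination hg⟩
  -- L3: y is regular mod (x, z^(k+1))
  have L3 : ∀ (k : ℕ) (c : R), c * y ∈ Ideal.span {x, z ^ (k + 1)} →
      c ∈ Ideal.span {x, z ^ (k + 1)} := by
    intro k
    induction k with
    | zero => intro c hc; rw [pow_one] at hc ⊢; exact L2 c hc
    | succ k ih =>
      intro c hc
      obtain ⟨a, b, hab⟩ := Ideal.mem_span_pair.mp hc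
      have hc' : c * y ∈ Ideal.span {x, z ^ (k + 1)} := by
        refine Ideal.mem_span_pair.mpr ⟨a, b * z, ?_⟩
        linear_combination hab
      obtain ⟨a', b', hab'⟩ := Ideal.mem_span_pair.mp (ih c hc')
      have key : (b' * y - b * z) * z ^ (k + 1) ∈ Ideal.span {x} := by
        have e3 : (b' * y - b * z) * z ^ (k + 1) = (a - a' * y) * x := by
          linear_combination -hab + y * hab'
        rw [e3]
        exact Ideal.mul_mem_left _ _ (Ideal.mem_span_singleton_self x)
      have hb' : b' * y - b * z ∈ Ideal.span {x} := L1pow (k + 1) _ key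
      obtain ⟨g, hg⟩ := Ideal.mem_span_singleton'.mp hb'
      have hb'2 : b' * y ∈ Ideal.span {x, z} :=
        Ideal.mem_span_pair.mpr ⟨g, b, by linear_combination hg⟩
      obtain ⟨p, q, hpq⟩ := Ideal.mem_span_pair.mp (L2 b' hb'2)
      exact Ideal.mem_span_pair.mpr ⟨a' + p * z ^ (k + 1), q,
        by linear_combination hab' + z ^ (k + 1) * hpq⟩
  -- identity for powers
  have hzn : z ^ (n - m) * z ^ m = z ^ n := by rw [← pow_add, Nat.sub_add_cancel hmn]
  apply le_antisymm
  · intro f hf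
    obtain ⟨hf1, hf2⟩ := Submodule.mem_inf.mp hf
    obtain ⟨a, b, hab⟩ := Ideal.mem_span_pair.mp hf1
    obtain ⟨c, d, hcd⟩ := Ideal.mem_span_pair.mp hf2
    have hcy : c * y ∈ Ideal.span {x, z ^ m} := by
      refine Ideal.mem_span_pair.mpr ⟨a, b - d * z ^ (n - m), ?_⟩
      linear_combination hab - hcd - d * hzn
    obtain ⟨m', rfl⟩ : ∃ m', m = m' + 1 := ⟨m - 1, (Nat.succ_pred_eq_of_pos hm).symm⟩
    obtain ⟨e, g, heg⟩ := Ideal.mem_span_pair.mp (L3 m' c hcy)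
    have hfe : f = e * (x * y) + g * (y * z ^ (m' + 1)) + d * z ^ n := by
      linear_combination -hcd - y * heg
    rw [hfe]
    refine add_mem (add_mem ?_ ?_) ?_
    · exact Ideal.mul_mem_left _ _ (Ideal.subset_span (by simp))
    · exact Ideal.mul_mem_left _ _ (Ideal.subset_span (by simp))
    · exact Ideal.mul_mem_left _ _ (Ideal.subset_span (by simp))
  · rw [Ideal.span_le]
    rintro w hw
    simp only [Set.mem_insert_iff, Set.mem_singleton_iff] at hw
    rcases hw with rfl | rfl | rfl
    · exact Submodule.mem_inf.mpr
        ⟨Ideal.mul_mem_right _ _ (Ideal.subset_span (by simp)),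
         Ideal.mul_mem_left _ _ (Ideal.subset_span (by simp))⟩
    · exact Submodule.mem_inf.mpr
        ⟨Ideal.mul_mem_left _ _ (Ideal.subset_span (by simp)),
         Ideal.mul_mem_right _ _ (Ideal.subset_span (by simp))⟩
    · refine Submodule.mem_inf.mpr ⟨?_, Ideal.subset_span (by simp)⟩
      rw [← hzn]
      exact Ideal.mul_mem_left _ _ (Ideal.subset_span (by simp))
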